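/- arXiv:2602.18737 — 4 statements merged into one kernel-verified Lean document; each statement's English description precedes it below -/
import Mathlib

section
/- For s > 1 and l ≥ 3, |t · F'_{s,l}(t)| ≤ 4s · F_{s,l}(t) for every real t. -/
noncomputable def Fsl (s l t : ℝ) : ℝ :=
  if |t| ≤ l then |t| ^ s
  else (1 - s^2) * l ^ s + (1/2) * s * (s+1) * l ^ (s-1) * |t|
        + (1/2) * s * (s-1) * l ^ (s+1) * |t|⁻¹

set_option maxHeartbeats 1000000 in
open Real Set Filter in
lemma stmt7_pos (s l : ℝ) (hs : 1 < s) (hl : 3 ≤ l) (t : ℝ) (ht : 0 < t) :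
    |t * deriv (Fsl s l) t| ≤ 4 * s * Fsl s l t := by
  have hl0 : (0:ℝ) < l := by linarith
  have hP : (0:ℝ) < l ^ s := rpow_pos_of_pos hl0 s
  rcases lt_trichotomy t l with htl | htl | htl
  · -- 0 < t < l
    have hev : Fsl s l =ᶠ[nhds t] fun u => u ^ s := by
      filter_upwards [Ioo_mem_nhds ht htl] with u hu
      simp [Fsl, abs_of_pos hu.1, hu.2.le]
    have hd : HasDerivAt (fun u : ℝ => u ^ s) (s * t ^ (s - 1)) t :=
      Real.hasDerivAt_rpow_const (Or.inl ht.ne')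
    rw [hev.deriv_eq, hd.deriv]
    have hts : t * (s * t ^ (s - 1)) = s * t ^ s := by
      rw [Real.rpow_sub_one ht.ne']; field_simp
    have hFt : Fsl s l t = t ^ s := by simp [Fsl, abs_of_pos ht, htl.le]
    have hts0 : (0:ℝ) ≤ t ^ s := (rpow_pos_of_pos ht s).le
    rw [hts, hFt, abs_of_nonneg (mul_nonneg (by linarith) hts0)]
    nlinarith [mul_nonneg (by linarith : (0:ℝ) ≤ 3*s) hts0]
  · -- t = l : boundary
    subst htl
    have hd1 : HasDerivAt (fun u : ℝ => u ^ s) (s * t ^ (s - 1)) t :=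
      Real.hasDerivAt_rpow_const (Or.inl ht.ne')
    have h1 : HasDerivWithinAt (Fsl s t) (s * t ^ (s - 1)) (Icc 0 t) t := by
      refine hd1.hasDerivWithinAt.congr (fun u hu => ?_) ?_
      · simp [Fsl, abs_of_nonneg hu.1, hu.2]
      · simp [Fsl, abs_of_pos ht]
    set g2 : ℝ → ℝ := fun u =>
      (1 - s^2) * t ^ s + (1/2) * s * (s+1) * t ^ (s-1) * u
        + (1/2) * s * (s-1) * t ^ (s+1) * u⁻¹ with hg2
    have e1 : t ^ (s+1) * (t^2)⁻¹ = t ^ (s-1) := by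
      rw [← div_eq_mul_inv, ← Real.rpow_natCast t 2, ← Real.rpow_sub ht]
      norm_num
      congr 1
      ring
    have e2 : t ^ (s-1) * t = t ^ s := by
      rw [← Real.rpow_add_one ht.ne']; norm_num
    have e3 : t ^ (s+1) * t⁻¹ = t ^ s := by
      rw [← div_eq_mul_inv, ← Real.rpow_sub_one ht.ne']; norm_num
    have hdg2 : HasDerivAt g2 (s * t ^ (s - 1)) t := by
      have hinv : HasDerivAt (fun u : ℝ => u⁻¹) (-(t^2)⁻¹) t := hasDerivAt_inv ht.ne'
      have h := (((hasDerivAt_id t).const_mul ((1/2) * s * (s+1) * t ^ (s-1))).const_add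
        ((1 - s^2) * t ^ s)).add (hinv.const_mul ((1/2) * s * (s-1) * t ^ (s+1)))
      convert h using 1
      · rfl
      · rfl
      · rfl
      linear_combination (1/2*s*(s-1)) * e1
    have hval : ∀ u : ℝ, t ≤ u → Fsl s t u = g2 u := by
      intro u hu
      rcases eq_or_lt_of_le hu with h | h
      · subst h
        show Fsl s t t = g2 t
        simp only [Fsl, hg2]
        rw [abs_of_pos ht, if_pos le_rfl]
        linear_combination (-(1/2)*s*(s+1))*e2 + (-(1/2)*s*(s-1))*e3
      · have hu0 : 0 < u := lt_trans ht h
        simp [Fsl, abs_of_pos hu0, not_le.mpr h, hg2]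
    have h2 : HasDerivWithinAt (Fsl s t) (s * t ^ (s - 1)) (Ici t) t :=
      hdg2.hasDerivWithinAt.congr (fun u hu => hval u hu) (hval t le_rfl)
    have hunion := h1.union h2
    rw [Icc_union_Ici_eq_Ici ht.le] at hunion
    have hD : HasDerivAt (Fsl s t) (s * t ^ (s - 1)) t :=
      hunion.hasDerivAt (Ici_mem_nhds ht)
    rw [hD.deriv]
    have hts : t * (s * t ^ (s - 1)) = s * t ^ s := by
      rw [Real.rpow_sub_one ht.ne']; field_simp
    have hFt : Fsl s t t = t ^ s := by simp [Fsl, abs_of_pos ht]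
    have hts0 : (0:ℝ) ≤ t ^ s := (rpow_pos_of_pos ht s).le
    rw [hts, hFt, abs_of_nonneg (mul_nonneg (by linarith) hts0)]
    nlinarith [mul_nonneg (by linarith : (0:ℝ) ≤ 3*s) hts0]
  · -- t > l
    have hev : Fsl s l =ᶠ[nhds t] fun u =>
        (1 - s^2) * l ^ s + (1/2) * s * (s+1) * l ^ (s-1) * u
          + (1/2) * s * (s-1) * l ^ (s+1) * u⁻¹ := by
      filter_upwards [Ioi_mem_nhds htl] with u hu
      have hu0 : 0 < u := lt_trans hl0 hu
      simp [Fsl, abs_of_pos hu0, not_le.mpr (mem_Ioi.mp hu)]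
    have hinv : HasDerivAt (fun u : ℝ => u⁻¹) (-(t^2)⁻¹) t :=
      hasDerivAt_inv ht.ne'
    have hd : HasDerivAt (fun u : ℝ =>
        (1 - s^2) * l ^ s + (1/2) * s * (s+1) * l ^ (s-1) * u
          + (1/2) * s * (s-1) * l ^ (s+1) * u⁻¹)
        ((1/2) * s * (s+1) * l ^ (s-1) + (1/2) * s * (s-1) * l ^ (s+1) * (-(t^2)⁻¹)) t := by
      have h := (((hasDerivAt_id t).const_mul ((1/2) * s * (s+1) * l ^ (s-1))).const_add
        ((1 - s^2) * l ^ s)).add (hinv.const_mul ((1/2) * s * (s-1) * l ^ (s+1)))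
      convert h using 1
      · rfl
      · rfl
      · rfl
      ring
    rw [hev.deriv_eq, hd.deriv]
    have hFt : Fsl s l t = (1 - s^2) * l ^ s + (1/2) * s * (s+1) * l ^ (s-1) * t
          + (1/2) * s * (s-1) * l ^ (s+1) * t⁻¹ := by
      simp [Fsl, abs_of_pos ht, not_le.mpr htl]
    rw [hFt]
    have hm1 : l ^ (s-1) = l ^ s * l⁻¹ := by
      rw [Real.rpow_sub_one hl0.ne']; field_simp
    have hp1 : l ^ (s+1) = l ^ s * l := by rw [Real.rpow_add_one hl0.ne']
    rw [hm1, hp1]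
    set P := l ^ s with hPdef
    rw [abs_le]
    constructor
    · rw [← sub_nonneg]
      have key : t * (1/2 * s * (s+1) * (P * l⁻¹) + 1/2 * s * (s-1) * (P * l) * (-(t^2)⁻¹))
          - -(4 * s * ((1 - s^2) * P + 1/2 * s * (s+1) * (P * l⁻¹) * t
            + 1/2 * s * (s-1) * (P * l) * t⁻¹))
          = P * s * ((4*s+1)*(s+1)*(t-l)^2 + 10*(s+1)*l*(t-l) + 10*l^2) * (2 * l * t)⁻¹ := by
        field_simp
        ring
      rw [key]
      have h1 : (0:ℝ) ≤ (4*s+1)*(s+1)*(t-l)^2 + 10*(s+1)*l*(t-l) + 10*l^2 := by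
        nlinarith [sq_nonneg (t-l), mul_nonneg (mul_nonneg (by linarith : (0:ℝ) ≤ s+1) hl0.le) (by linarith : (0:ℝ) ≤ t - l)]
      positivity
    · rw [← sub_nonneg]
      have key : 4 * s * ((1 - s^2) * P + 1/2 * s * (s+1) * (P * l⁻¹) * t
            + 1/2 * s * (s-1) * (P * l) * t⁻¹)
          - t * (1/2 * s * (s+1) * (P * l⁻¹) + 1/2 * s * (s-1) * (P * l) * (-(t^2)⁻¹))
          = P * s * ((4*s-1)*(s+1)*(t-l)^2 + 6*(s+1)*l*(t-l) + 6*l^2) * (2 * l * t)⁻¹ := by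
        field_simp
        ring
      rw [key]
      have h1 : (0:ℝ) ≤ (4*s-1)*(s+1)*(t-l)^2 + 6*(s+1)*l*(t-l) + 6*l^2 := by
        nlinarith [sq_nonneg (t-l), mul_nonneg (mul_nonneg (by linarith : (0:ℝ) ≤ s+1) hl0.le) (by linarith : (0:ℝ) ≤ t - l)]
      positivity

theorem stmt_7 (s l : ℝ) (hs : 1 < s) (hl : 3 ≤ l) (t : ℝ) :
    |t * deriv (Fsl s l) t| ≤ 4 * s * Fsl s l t := by
  have heven : ∀ u : ℝ, Fsl s l (-u) = Fsl s l u := by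
    intro u; simp [Fsl]
  rcases lt_trichotomy t 0 with ht | ht | ht
  · have hneg : deriv (Fsl s l) t = - deriv (Fsl s l) (-t) := by
      conv_lhs => rw [show Fsl s l = fun u => Fsl s l (-u) from funext fun u => (heven u).symm]
      exact deriv_comp_neg (Fsl s l) t
    have h := stmt7_pos s l hs hl (-t) (by linarith)
    rw [hneg, show t * -deriv (Fsl s l) (-t) = (-t) * deriv (Fsl s l) (-t) by ring,
      show Fsl s l t = Fsl s l (-t) from (heven t).symm]
    exact h
  · subst ht
    have hF0 : Fsl s l 0 = 0 := by
      simp [Fsl, (by linarith : (0:ℝ) ≤ l), Real.zero_rpow (ne_of_gt (by linarith : (0:ℝ) < s))]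
    simp [hF0]
  · exact stmt7_pos s l hs hl t ht
end

section
/- For s > 1 and l ≥ 3, setting G_{s,l} = F_{s,l} · F'_{s,l}, one has |F'_{s,l}(t)|² ≤ s² · G'_{s,l}(t) for every real t. -/
open Real Filter Topology Set

noncomputable def Gsl (s l t : ℝ) : ℝ := Fsl s l t * deriv (Fsl s l) t

/-- explicit formula for the derivative of `Fsl`. -/
noncomputable def Fd (s l t : ℝ) : ℝ :=
  if |t| ≤ l then s * t * |t| ^ (s - 2)
  else (1/2) * s * (s+1) * l ^ (s-1) * (t / |t|)
       - (1/2) * s * (s-1) * l ^ (s+1) * (t / |t| ^ (3:ℕ))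

/-- explicit formula for the second derivative of `Fsl`. -/
noncomputable def Fdd (s l t : ℝ) : ℝ :=
  if |t| ≤ l then s * (s-1) * |t| ^ (s - 2)
  else s * (s-1) * l ^ (s+1) / |t| ^ (3:ℕ)

lemma Fsl_neg (s l t : ℝ) : Fsl s l (-t) = Fsl s l t := by
  simp [Fsl, abs_neg]

lemma Fd_neg (s l t : ℝ) : Fd s l (-t) = -Fd s l t := by
  simp only [Fd, abs_neg]
  split <;> ring

lemma Fdd_neg (s l t : ℝ) : Fdd s l (-t) = Fdd s l t := by
  simp only [Fdd, abs_neg]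

lemma hasDerivAt_of_even {f : ℝ → ℝ} (hf : ∀ x, f (-x) = f x) {d t : ℝ}
    (h : HasDerivAt f d t) : HasDerivAt f (-d) (-t) := by
  have h2 : HasDerivAt (f ∘ fun x : ℝ => -x) (d * (-1)) (-t) :=
    (neg_neg t ▸ h).comp (-t) (hasDerivAt_neg (-t : ℝ))
  have he : (f ∘ fun x : ℝ => -x) = f := funext fun x => hf x
  rw [he] at h2
  simpa using h2

lemma hasDerivAt_of_odd {f : ℝ → ℝ} (hf : ∀ x, f (-x) = -f x) {d t : ℝ}
    (h : HasDerivAt f d t) : HasDerivAt f d (-t) := by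
  have h2 : HasDerivAt (f ∘ fun x : ℝ => -x) (d * (-1)) (-t) :=
    (neg_neg t ▸ h).comp (-t) (hasDerivAt_neg (-t : ℝ))
  have h3 := h2.neg
  have he : (fun x => -(f ∘ fun y : ℝ => -y) x) = f := funext fun x => by
    simp [Function.comp, hf x]
  rw [show (-(f ∘ fun y : ℝ => -y)) = f from he] at h3
  simpa using h3

lemma tendsto_abs_rpow (p : ℝ) (hp : 0 < p) :
    Tendsto (fun x : ℝ => |x| ^ p) (𝓝 0) (𝓝 0) := by
  have h1 : ContinuousAt (fun y : ℝ => y ^ p) 0 :=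
    Real.continuousAt_rpow_const 0 p (Or.inr hp.le)
  have h2 := h1.tendsto.comp (by simpa using continuous_abs.tendsto (0:ℝ))
  simpa [Real.zero_rpow hp.ne', Function.comp_def] using h2

lemma hasDerivAt_zero_aux (f : ℝ → ℝ) (hf0 : f 0 = 0) (c p : ℝ) (hp : 0 < p)
    (hb : ∀ x : ℝ, x ≠ 0 → |f x / x| ≤ c * |x| ^ p) : HasDerivAt f 0 0 := by
  rw [hasDerivAt_iff_tendsto_slope]
  refine squeeze_zero_norm' (a := fun x => c * |x| ^ p) ?_ ?_
  · filter_upwards [self_mem_nhdsWithin] with x hx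
    have hx' : (x:ℝ) ≠ 0 := hx
    have : slope f 0 x = f x / x := by simp [slope_def_field, hf0]
    rw [this, Real.norm_eq_abs]
    exact hb x hx'
  · have := (tendsto_abs_rpow p hp).const_mul c
    simpa using this.mono_left nhdsWithin_le_nhds
section Idents

variable {s l : ℝ}

lemma pow_ident1 (s : ℝ) (hl0 : 0 < l) : l ^ (s-1) * l = l ^ s := by
  rw [← Real.rpow_add_one hl0.ne' (s-1)]; norm_num

lemma pow_ident2 (s : ℝ) (hl0 : 0 < l) : l ^ (s+1) = l ^ (s-1) * l ^ (2:ℕ) := by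
  rw [show s+1 = (s-1) + ((2:ℕ):ℝ) by push_cast; ring, Real.rpow_add hl0, Real.rpow_natCast]

lemma pow_ident3 (s : ℝ) (hl0 : 0 < l) : l ^ (s+1) * l⁻¹ = l ^ s := by
  rw [← div_eq_mul_inv, ← Real.rpow_sub_one hl0.ne']; norm_num

lemma pow_ident4 (s : ℝ) (hl0 : 0 < l) : l ^ (s+1) = l ^ (s-2) * l ^ (3:ℕ) := by
  rw [show s+1 = (s-2) + ((3:ℕ):ℝ) by push_cast; ring, Real.rpow_add hl0, Real.rpow_natCast]

lemma deriv_match (s : ℝ) (hl0 : 0 < l) :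
    (1/2)*s*(s+1)*l^(s-1) - (1/2)*s*(s-1)*l^(s+1)/l^(2:ℕ) = s * l^(s-1) := by
  rw [pow_ident2 s hl0]
  have h2 : (l:ℝ)^(2:ℕ) ≠ 0 := pow_ne_zero _ hl0.ne'
  field_simp
  ring

lemma value_match (s : ℝ) (hl0 : 0 < l) :
    (1 - s^2) * l ^ s + (1/2) * s * (s+1) * l ^ (s-1) * l
        + (1/2) * s * (s-1) * l ^ (s+1) * l⁻¹ = l ^ s := by
  have e1 := pow_ident1 s hl0
  have e3 := pow_ident3 s hl0
  linear_combination ((1:ℝ)/2)*s*(s+1)*e1 + (1/2)*s*(s-1)*e3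

lemma outer_hasDerivAt (s l : ℝ) {x : ℝ} (hx : 0 < x) :
    HasDerivAt (fun y : ℝ => (1 - s^2) * l ^ s + (1/2) * s * (s+1) * l ^ (s-1) * y
        + (1/2) * s * (s-1) * l ^ (s+1) * y⁻¹)
      ((1/2) * s * (s+1) * l ^ (s-1) - (1/2) * s * (s-1) * l ^ (s+1) / x^(2:ℕ)) x := by
  have h1 : HasDerivAt (fun y : ℝ => (1/2) * s * (s+1) * l ^ (s-1) * y)
      ((1/2) * s * (s+1) * l ^ (s-1)) x := by
    simpa using (hasDerivAt_id x).const_mul ((1/2) * s * (s+1) * l ^ (s-1))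
  have h2 : HasDerivAt (fun y : ℝ => (1/2) * s * (s-1) * l ^ (s+1) * y⁻¹)
      ((1/2) * s * (s-1) * l ^ (s+1) * -(x^(2:ℕ))⁻¹) x :=
    (hasDerivAt_inv hx.ne').const_mul _
  have h3 := ((hasDerivAt_const x ((1 - s^2) * l ^ s)).add h1).add h2
  refine h3.congr_deriv ?_
  ring

end Idents

lemma hasDerivAt_Fsl (s l : ℝ) (hs : 1 < s) (hl : 3 ≤ l) (t : ℝ) :
    HasDerivAt (Fsl s l) (Fd s l t) t := by
  have hl0 : (0:ℝ) < l := by linarith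
  -- reduce to t ≥ 0
  suffices H : ∀ u : ℝ, 0 ≤ u → HasDerivAt (Fsl s l) (Fd s l u) u by
    rcases le_or_gt 0 t with ht | ht
    · exact H t ht
    · have h := hasDerivAt_of_even (Fsl_neg s l) (H (-t) (by linarith))
      rw [neg_neg] at h
      have : -Fd s l (-t) = Fd s l t := by rw [Fd_neg]; ring
      rwa [this] at h
  intro u hu
  rcases eq_or_lt_of_le hu with h0 | h0
  · -- u = 0
    obtain rfl : u = 0 := h0.symm
    have hFd : Fd s l 0 = 0 := by simp [Fd, hl0.le]
    rw [hFd]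
    have hg1 : HasDerivAt (fun x : ℝ => |x| ^ s) 0 0 := by
      apply hasDerivAt_zero_aux _ (by simp [Real.zero_rpow (by positivity : s ≠ 0)])
        1 (s-1) (by linarith)
      intro x hx
      have hx0 : (0:ℝ) < |x| := abs_pos.2 hx
      rw [abs_div, abs_of_nonneg (Real.rpow_nonneg (abs_nonneg x) s), one_mul,
        Real.rpow_sub hx0, Real.rpow_one]
    apply hg1.congr_of_eventuallyEq
    filter_upwards [Ioo_mem_nhds (by linarith : -l < (0:ℝ)) (by linarith : (0:ℝ) < l)] with x hx
    have hxl : |x| ≤ l := abs_le.2 ⟨hx.1.le, hx.2.le⟩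
    simp [Fsl, hxl]
  · rcases lt_trichotomy u l with hul | hul | hul
    · -- 0 < u < l : inner region
      have hg := Real.hasDerivAt_rpow_const (p := s) (Or.inl h0.ne')
      have hFd : Fd s l u = s * u ^ (s-1) := by
        simp only [Fd, abs_of_pos h0, if_pos hul.le]
        rw [show s-1 = (s-2)+1 by ring, Real.rpow_add_one h0.ne']
        ring
      rw [hFd]
      apply hg.congr_of_eventuallyEq
      filter_upwards [Ioo_mem_nhds h0 hul] with x hx
      simp [Fsl, abs_of_pos hx.1, hx.2.le]
    · -- u = l : junction
      have hul' := hul.symm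
      subst hul'
      have hFd : Fd s l l = s * l ^ (s-1) := by
        simp only [Fd, abs_of_pos h0, if_pos le_rfl]
        rw [show s-1 = (s-2)+1 by ring, Real.rpow_add_one h0.ne']
        ring
      rw [hFd]
      have hL : HasDerivWithinAt (Fsl s l) (s * l ^ (s-1)) (Set.Iic l) l := by
        have h1 := (Real.hasDerivAt_rpow_const (p := s) (Or.inl h0.ne')).hasDerivWithinAt
          (s := Set.Iic l)
        apply h1.congr_of_eventuallyEq
        · filter_upwards [self_mem_nhdsWithin,
            mem_nhdsWithin_of_mem_nhds (Ioi_mem_nhds h0)] with x hx1 hx2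
          have hax : |x| ≤ l := by rw [abs_of_pos hx2]; exact hx1
          simp only [Fsl]
          rw [if_pos hax, abs_of_pos hx2]
        · simp only [Fsl]
          rw [if_pos (le_of_eq (abs_of_pos h0)), abs_of_pos h0]
      have hR : HasDerivWithinAt (Fsl s l) (s * l ^ (s-1)) (Set.Ici l) l := by
        have h1 := (outer_hasDerivAt s l h0).hasDerivWithinAt (s := Set.Ici l)
        rw [deriv_match s h0] at h1
        apply h1.congr_of_eventuallyEq
        · filter_upwards [self_mem_nhdsWithin] with x hx1
          rcases eq_or_lt_of_le (Set.mem_Ici.mp hx1) with rfl | hgt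
          · simp only [Fsl]
            rw [if_pos (le_of_eq (abs_of_pos h0)), abs_of_pos h0]
            exact (value_match s h0).symm
          · have hx0 : (0:ℝ) < x := lt_trans h0 hgt
            have hax : ¬ |x| ≤ l := by rw [abs_of_pos hx0]; exact not_le.2 hgt
            simp only [Fsl]
            rw [if_neg hax, abs_of_pos hx0]
        · simp only [Fsl]
          rw [if_pos (le_of_eq (abs_of_pos h0)), abs_of_pos h0]
          exact (value_match s h0).symm
      have hun := hL.union hR
      rw [Set.Iic_union_Ici] at hun
      exact hasDerivWithinAt_univ.mp hun
    · -- u > l : outer region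
      have hg := outer_hasDerivAt s l h0
      have hFd : Fd s l u =
          (1/2)*s*(s+1)*l^(s-1) - (1/2)*s*(s-1)*l^(s+1)/u^(2:ℕ) := by
        have hnl : ¬ |u| ≤ l := by rw [abs_of_pos h0]; exact not_le.2 hul
        simp only [Fd]
        rw [if_neg hnl, abs_of_pos h0]
        field_simp
      rw [hFd]
      apply hg.congr_of_eventuallyEq
      filter_upwards [Ioi_mem_nhds hul] with x hx
      have hx0 : (0:ℝ) < x := lt_trans hl0 hx
      have hax : ¬ |x| ≤ l := by rw [abs_of_pos hx0]; exact not_le.2 hx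
      simp only [Fsl]
      rw [if_neg hax, abs_of_pos hx0]

lemma Fd_inner (s l : ℝ) {x : ℝ} (hx0 : 0 < x) (hxl : x ≤ l) :
    Fd s l x = s * x ^ (s-1) := by
  have hax : |x| ≤ l := by rw [abs_of_pos hx0]; exact hxl
  simp only [Fd]
  rw [if_pos hax, abs_of_pos hx0, show s-2 = (s-1)-1 by ring,
    Real.rpow_sub_one hx0.ne']
  field_simp

lemma Fd_outer (s l : ℝ) {x : ℝ} (hx0 : 0 < x) (hxl : l < x) :
    Fd s l x = (1/2)*s*(s+1)*l^(s-1) - (1/2)*s*(s-1)*l^(s+1) * (x^(2:ℕ))⁻¹ := by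
  have hax : ¬ |x| ≤ l := by rw [abs_of_pos hx0]; exact not_le.2 hxl
  simp only [Fd]
  rw [if_neg hax, abs_of_pos hx0]
  field_simp

lemma outer2_hasDerivAt (s l : ℝ) {x : ℝ} (hx : 0 < x) :
    HasDerivAt (fun y : ℝ => (1/2)*s*(s+1)*l^(s-1) - (1/2)*s*(s-1)*l^(s+1) * (y^(2:ℕ))⁻¹)
      (s*(s-1)*l^(s+1) / x^(3:ℕ)) x := by
  have h2 : HasDerivAt (fun y : ℝ => ((y^(2:ℕ)))⁻¹)
      (-(((2:ℕ):ℝ) * x^(2-1)) / (x^(2:ℕ))^2) x :=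
    (hasDerivAt_pow 2 x).inv (pow_ne_zero _ hx.ne')
  have h3 := (hasDerivAt_const x ((1/2)*s*(s+1)*l^(s-1))).sub
    (h2.const_mul ((1/2)*s*(s-1)*l^(s+1)))
  refine h3.congr_deriv ?_
  field_simp
  ring

lemma hasDerivAt_Fd (s l : ℝ) (hs : 1 < s) (hl : 3 ≤ l) {t : ℝ} (ht : t ≠ 0) :
    HasDerivAt (Fd s l) (Fdd s l t) t := by
  have hl0 : (0:ℝ) < l := by linarith
  suffices H : ∀ u : ℝ, 0 < u → HasDerivAt (Fd s l) (Fdd s l u) u by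
    rcases ht.lt_or_gt with h | h
    · have h2 := hasDerivAt_of_odd (Fd_neg s l) (H (-t) (by linarith))
      rw [neg_neg] at h2
      rwa [Fdd_neg] at h2
    · exact H t h
  intro u h0
  have hinner : ∀ x : ℝ, 0 < x →
      HasDerivAt (fun y : ℝ => s * y ^ (s-1)) (s*(s-1)*x^(s-2)) x := by
    intro x hx0
    have h1 := (Real.hasDerivAt_rpow_const (p := s-1) (Or.inl hx0.ne')).const_mul s
    refine h1.congr_deriv ?_
    rw [show s-1-1 = s-2 by ring]
    ring
  rcases lt_trichotomy u l with hul | hul | hul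
  · -- inner region
    have hFdd : Fdd s l u = s*(s-1)*u^(s-2) := by
      have hau : |u| ≤ l := by rw [abs_of_pos h0]; exact hul.le
      simp only [Fdd]
      rw [if_pos hau, abs_of_pos h0]
    rw [hFdd]
    apply (hinner u h0).congr_of_eventuallyEq
    filter_upwards [Ioo_mem_nhds h0 hul] with x hx
    exact Fd_inner s l hx.1 hx.2.le
  · -- junction
    have hul' := hul.symm
    subst hul'
    have hFdd : Fdd s l l = s*(s-1)*l^(s-2) := by
      have hau : |l| ≤ l := le_of_eq (abs_of_pos h0)
      simp only [Fdd]
      rw [if_pos hau, abs_of_pos h0]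
    rw [hFdd]
    have hL : HasDerivWithinAt (Fd s l) (s*(s-1)*l^(s-2)) (Set.Iic l) l := by
      apply ((hinner l h0).hasDerivWithinAt (s := Set.Iic l)).congr_of_eventuallyEq
      · filter_upwards [self_mem_nhdsWithin,
          mem_nhdsWithin_of_mem_nhds (Ioi_mem_nhds h0)] with x hx1 hx2
        exact Fd_inner s l hx2 hx1
      · exact Fd_inner s l h0 le_rfl
    have hR : HasDerivWithinAt (Fd s l) (s*(s-1)*l^(s-2)) (Set.Ici l) l := by
      have h1 := (outer2_hasDerivAt s l h0).hasDerivWithinAt (s := Set.Ici l)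
      have e : s*(s-1)*l^(s+1)/l^(3:ℕ) = s*(s-1)*l^(s-2) := by
        rw [pow_ident4 s hl0]
        have h3 : (l:ℝ)^(3:ℕ) ≠ 0 := pow_ne_zero _ hl0.ne'
        field_simp
      rw [e] at h1
      apply h1.congr_of_eventuallyEq
      · filter_upwards [self_mem_nhdsWithin] with x hx1
        rcases eq_or_lt_of_le (Set.mem_Ici.mp hx1) with rfl | hgt
        · rw [Fd_inner s l h0 le_rfl, ← deriv_match s h0]; ring
        · exact Fd_outer s l (lt_trans h0 hgt) hgt
      · rw [Fd_inner s l h0 le_rfl, ← deriv_match s h0]; ring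
    have hun := hL.union hR
    rw [Set.Iic_union_Ici] at hun
    exact hasDerivWithinAt_univ.mp hun
  · -- outer region
    have hFdd : Fdd s l u = s*(s-1)*l^(s+1)/u^(3:ℕ) := by
      have hau : ¬ |u| ≤ l := by rw [abs_of_pos h0]; exact not_le.2 hul
      simp only [Fdd]
      rw [if_neg hau, abs_of_pos h0]
    rw [hFdd]
    apply (outer2_hasDerivAt s l h0).congr_of_eventuallyEq
    filter_upwards [Ioi_mem_nhds hul] with x hx
    exact Fd_outer s l (lt_trans hl0 hx) hx

lemma hasDerivAt_Gsl (s l : ℝ) (hs : 1 < s) (hl : 3 ≤ l) (t : ℝ) :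
    HasDerivAt (Gsl s l) ((Fd s l t)^2 + Fsl s l t * Fdd s l t) t := by
  have hl0 : (0:ℝ) < l := by linarith
  have hs0 : (0:ℝ) < s := by linarith
  have hGfun : Gsl s l = fun x => Fsl s l x * Fd s l x := by
    funext x
    rw [Gsl, (hasDerivAt_Fsl s l hs hl x).deriv]
  rw [hGfun]
  rcases eq_or_ne t 0 with rfl | ht
  · -- t = 0
    have hF0 : Fsl s l 0 = 0 := by
      simp [Fsl, hl0.le, Real.zero_rpow hs0.ne']
    have hFd0 : Fd s l 0 = 0 := by simp [Fd, hl0.le]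
    have hg2 : HasDerivAt (fun x : ℝ => |x|^s * (s * x * |x|^(s-2))) 0 0 := by
      apply hasDerivAt_zero_aux _ (by simp) s (2*s-2) (by linarith)
      intro x hx
      have hx0 : (0:ℝ) < |x| := abs_pos.2 hx
      have key : |x|^s * |x|^(s-2) = |x|^(2*s-2) := by
        rw [← Real.rpow_add hx0]; ring_nf
      have h1 : |x|^s * (s * x * |x|^(s-2)) / x = s * |x|^(2*s-2) := by
        rw [show |x|^s * (s * x * |x|^(s-2)) = s * (|x|^s * |x|^(s-2)) * x by ring,
          mul_div_assoc, div_self hx, mul_one, key]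
      rw [h1, abs_of_nonneg (mul_nonneg hs0.le (Real.rpow_nonneg (abs_nonneg x) _))]
    have hev : (fun x => Fsl s l x * Fd s l x) =ᶠ[𝓝 (0:ℝ)]
        (fun x : ℝ => |x|^s * (s * x * |x|^(s-2))) := by
      filter_upwards [Ioo_mem_nhds (by linarith : -l < (0:ℝ)) (by linarith : (0:ℝ) < l)]
        with x hx
      have hax : |x| ≤ l := abs_le.2 ⟨hx.1.le, hx.2.le⟩
      simp only [Fsl, Fd, if_pos hax]
    have h := hg2.congr_of_eventuallyEq hev
    have hval : (Fd s l 0)^2 + Fsl s l 0 * Fdd s l 0 = 0 := by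
      rw [hF0, hFd0]; ring
    rw [hval]
    exact h
  · have h := (hasDerivAt_Fsl s l hs hl t).mul (hasDerivAt_Fd s l hs hl ht)
    refine h.congr_deriv ?_
    ring

lemma Fsl_nonneg (s l : ℝ) (hs : 1 < s) (hl : 3 ≤ l) (t : ℝ) : 0 ≤ Fsl s l t := by
  have hl0 : (0:ℝ) < l := by linarith
  rw [Fsl]
  split
  · exact Real.rpow_nonneg (abs_nonneg t) s
  · rename_i h
    push_neg at h
    set u := |t| with hu
    have hu0 : 0 < u := lt_trans hl0 h
    have hM : (0:ℝ) < l ^ (s-1) := Real.rpow_pos_of_pos hl0 _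
    have e1 : l ^ s = l ^ (s-1) * l := (pow_ident1 s hl0).symm
    have e2 : l ^ (s+1) = l ^ (s-1) * l^(2:ℕ) := pow_ident2 s hl0
    have hv0 : (0:ℝ) < u⁻¹ := inv_pos.2 hu0
    have key : 0 ≤ ((1-s^2)*l + (1/2)*(s^2+s)*u + (1/2)*(s^2-s)*l^(2:ℕ)*u⁻¹) * u := by
      have expand : ((1-s^2)*l + (1/2)*(s^2+s)*u + (1/2)*(s^2-s)*l^(2:ℕ)*u⁻¹) * u
          = (1-s^2)*l*u + (1/2)*(s^2+s)*u^2 + (1/2)*(s^2-s)*l^(2:ℕ) * (u⁻¹*u) := by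
        ring
      rw [expand, inv_mul_cancel₀ hu0.ne', mul_one]
      nlinarith [sq_nonneg (u - l), mul_pos hl0 (sub_pos.2 h), sq_nonneg u, sq_nonneg l]
    have inner : 0 ≤ (1-s^2)*l + (1/2)*(s^2+s)*u + (1/2)*(s^2-s)*l^(2:ℕ)*u⁻¹ := by
      have h2 := mul_nonneg key hv0.le
      have h3 : (((1-s^2)*l + (1/2)*(s^2+s)*u + (1/2)*(s^2-s)*l^(2:ℕ)*u⁻¹) * u) * u⁻¹
          = (1-s^2)*l + (1/2)*(s^2+s)*u + (1/2)*(s^2-s)*l^(2:ℕ)*u⁻¹ := by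
        rw [mul_assoc, mul_inv_cancel₀ hu0.ne', mul_one]
      rwa [h3] at h2
    have goal_eq : (1 - s^2) * l ^ s + (1/2) * s * (s+1) * l ^ (s-1) * u
          + (1/2) * s * (s-1) * l ^ (s+1) * u⁻¹
        = l ^ (s-1) * ((1-s^2)*l + (1/2)*(s^2+s)*u + (1/2)*(s^2-s)*l^(2:ℕ)*u⁻¹) := by
      rw [e1, e2]; ring
    rw [goal_eq]
    exact mul_nonneg hM.le inner

lemma Fdd_nonneg (s l : ℝ) (hs : 1 < s) (hl : 3 ≤ l) (t : ℝ) : 0 ≤ Fdd s l t := by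
  have hss : (0:ℝ) ≤ s * (s-1) := by nlinarith
  rw [Fdd]
  split
  · exact mul_nonneg hss (Real.rpow_nonneg (abs_nonneg t) _)
  · apply div_nonneg _ (pow_nonneg (abs_nonneg t) _)
    exact mul_nonneg hss (Real.rpow_nonneg (by linarith) _)

theorem stmt_8 (s l : ℝ) (hs : 1 < s) (hl : 3 ≤ l) (t : ℝ) :
    |deriv (Fsl s l) t| ^ 2 ≤ s ^ 2 * deriv (Gsl s l) t := by
  rw [(hasDerivAt_Fsl s l hs hl t).deriv, (hasDerivAt_Gsl s l hs hl t).deriv, sq_abs]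
  have h1 := Fsl_nonneg s l hs hl t
  have h2 := Fdd_nonneg s l hs hl t
  nlinarith [sq_nonneg (Fd s l t), mul_nonneg h1 h2,
    mul_nonneg (mul_nonneg h1 h2) (by nlinarith : (0:ℝ) ≤ s^2),
    mul_nonneg (by nlinarith : (0:ℝ) ≤ s^2 - 1) (sq_nonneg (Fd s l t))]
end

section
/- For fixed s > 1 and 3 ≤ l < k, F_{s,l}(t) ≤ F_{s,k}(t) for every real t; i.e. F_{s,l} is monotone increasing in the parameter l. -/
private lemma fsl_hasDeriv (s x : ℝ) {m : ℝ} (hm : 0 < m) :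
    HasDerivAt (fun m : ℝ => (1 - s^2) * m ^ s + (1/2) * s * (s+1) * m ^ (s-1) * x
        + (1/2) * s * (s-1) * m ^ (s+1) * x⁻¹)
      ((1 - s^2) * (s * m ^ (s-1)) + (1/2) * s * (s+1) * ((s-1) * m ^ (s-1-1)) * x
        + (1/2) * s * (s-1) * ((s+1) * m ^ (s+1-1)) * x⁻¹) m := by
  have h1 := (Real.hasDerivAt_rpow_const (x := m) (p := s) (Or.inl hm.ne')).const_mul (1 - s^2)
  have h2 := ((Real.hasDerivAt_rpow_const (x := m) (p := s-1)
    (Or.inl hm.ne')).const_mul ((1/2)*s*(s+1))).mul_const x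
  have h3 := ((Real.hasDerivAt_rpow_const (x := m) (p := s+1)
    (Or.inl hm.ne')).const_mul ((1/2)*s*(s-1))).mul_const x⁻¹
  have h := (h1.add h2).add h3
  exact h

private lemma fsl_key (s x : ℝ) (hs : 1 < s) {a b : ℝ} (ha : 0 < a) (hab : a ≤ b)
    (hbx : b ≤ x) :
    (1 - s^2) * a ^ s + (1/2) * s * (s+1) * a ^ (s-1) * x + (1/2) * s * (s-1) * a ^ (s+1) * x⁻¹
    ≤ (1 - s^2) * b ^ s + (1/2) * s * (s+1) * b ^ (s-1) * x
      + (1/2) * s * (s-1) * b ^ (s+1) * x⁻¹ := by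
  have hx : 0 < x := lt_of_lt_of_le ha (hab.trans hbx)
  set f : ℝ → ℝ := fun m => (1 - s^2) * m ^ s + (1/2) * s * (s+1) * m ^ (s-1) * x
        + (1/2) * s * (s-1) * m ^ (s+1) * x⁻¹ with hf
  have hmono : MonotoneOn f (Set.Icc a b) := by
    apply monotoneOn_of_deriv_nonneg (convex_Icc a b)
    · intro m hm
      exact (fsl_hasDeriv s x (lt_of_lt_of_le ha hm.1)).continuousAt.continuousWithinAt
    · intro m hm
      rw [interior_Icc] at hm
      exact (fsl_hasDeriv s x (ha.trans hm.1)).differentiableAt.differentiableWithinAt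
    · intro m hm
      rw [interior_Icc] at hm
      have hm0 : 0 < m := ha.trans hm.1
      have hmx : m ≤ x := le_trans hm.2.le hbx
      rw [(fsl_hasDeriv s x hm0).deriv]
      have e1 : m ^ (s-1) = m ^ (s-2) * m := by
        rw [show s - 1 = (s-2) + 1 by ring, Real.rpow_add hm0, Real.rpow_one]
      have e2 : m ^ (s+1-1) = m ^ (s-2) * (m * m) := by
        rw [show s + 1 - 1 = ((s-2) + 1) + 1 by ring, Real.rpow_add hm0,
          Real.rpow_add hm0, Real.rpow_one]
        ring
      have e3 : s - 1 - 1 = s - 2 := by ring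
      rw [e3, e1, e2]
      have hM : (0:ℝ) ≤ m ^ (s-2) := Real.rpow_nonneg hm0.le _
      have hfac : (0:ℝ) ≤ s * (s-1) * (s+1) :=
        (mul_pos (mul_pos (by linarith : (0:ℝ) < s) (by linarith : (0:ℝ) < s - 1))
          (by linarith : (0:ℝ) < s + 1)).le
      have hkey : (1 - s^2) * (s * (m ^ (s-2) * m)) + (1/2) * s * (s+1) * ((s-1) * m ^ (s-2)) * x
          + (1/2) * s * (s-1) * ((s+1) * (m ^ (s-2) * (m * m))) * x⁻¹
          = s * (s-1) * (s+1) * m ^ (s-2) * (x - m)^2 * (2*x)⁻¹ := by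
        field_simp
        ring
      rw [hkey]
      have h2x : (0:ℝ) ≤ (2*x)⁻¹ := by positivity
      exact mul_nonneg (mul_nonneg (mul_nonneg hfac hM) (sq_nonneg _)) h2x
  exact hmono (Set.left_mem_Icc.mpr hab) (Set.right_mem_Icc.mpr hab) hab

private lemma fsl_eval (s x : ℝ) (hx : 0 < x) :
    (1 - s^2) * x ^ s + (1/2) * s * (s+1) * x ^ (s-1) * x
      + (1/2) * s * (s-1) * x ^ (s+1) * x⁻¹ = x ^ s := by
  have e1 : x ^ (s-1) * x = x ^ s := by
    rw [← Real.rpow_add_one hx.ne', sub_add_cancel]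
  have e2 : x ^ (s+1) * x⁻¹ = x ^ s := by
    rw [Real.rpow_add_one hx.ne', mul_assoc, mul_inv_cancel₀ hx.ne', mul_one]
  calc (1 - s^2) * x ^ s + (1/2) * s * (s+1) * x ^ (s-1) * x
      + (1/2) * s * (s-1) * x ^ (s+1) * x⁻¹
      = (1 - s^2) * x ^ s + (1/2) * s * (s+1) * (x ^ (s-1) * x)
        + (1/2) * s * (s-1) * (x ^ (s+1) * x⁻¹) := by ring
    _ = x ^ s := by rw [e1, e2]; ring

theorem stmt_9 (s l k : ℝ) (hs : 1 < s) (hl : 3 ≤ l) (hlk : l < k) (t : ℝ) :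
    Fsl s l t ≤ Fsl s k t := by
  have hl0 : (0:ℝ) < l := by linarith
  unfold Fsl
  by_cases h1 : |t| ≤ l
  · rw [if_pos h1, if_pos (h1.trans hlk.le)]
  · rw [if_neg h1]
    push_neg at h1
    by_cases h2 : |t| ≤ k
    · rw [if_pos h2]
      have hkey := fsl_key s |t| hs hl0 h1.le le_rfl
      have heval := fsl_eval s |t| (hl0.trans h1)
      linarith
    · rw [if_neg h2]
      push_neg at h2
      exact fsl_key s |t| hs hl0 hlk.le h2.le
end

section
/- For s ∈ (1,∞) and l ∈ [3,∞), the function g(t) = t^s - (1-s²)l^s - (1/2)s(s+1)l^{s-1}t - (1/2)s(s-1)l^{s+1}t^{-1} satisfies g(l) = 0 and g'(t) ≥ 0 for all t ≥ l; consequently g(t) ≥ 0 for all t ≥ l. -/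
theorem stmt_18 (s l : ℝ) (hs : 1 < s) (hl : 3 ≤ l)
    (g : ℝ → ℝ)
    (hg : g = fun t => t ^ s - (1 - s^2) * l ^ s - (1/2) * s * (s+1) * l ^ (s-1) * t
        - (1/2) * s * (s-1) * l ^ (s+1) * t⁻¹) :
    g l = 0 ∧ (∀ t, l ≤ t → 0 ≤ deriv g t) ∧ ∀ t, l ≤ t → 0 ≤ g t := by
  have hl0 : (0:ℝ) < l := by linarith
  have el1 : l ^ s = l ^ (s-1) * l := by
    rw [← Real.rpow_add_one hl0.ne' (s-1)]; ring_nf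
  have el2 : l ^ (s+1) = l ^ s * l := by
    rw [← Real.rpow_add_one hl0.ne' s]
  set f : ℝ → ℝ := fun t => s * t ^ (s-1) - (1/2) * s * (s+1) * l ^ (s-1)
      + (1/2) * s * (s-1) * l ^ (s+1) * (t^2)⁻¹ with hf
  -- value of g at l
  have hgl : g l = 0 := by
    subst hg
    simp only
    rw [el2, el1]
    field_simp
    ring
  -- derivative of g
  have hder : ∀ t : ℝ, 0 < t → HasDerivAt g (f t) t := by
    intro t ht
    subst hg
    have h1 : HasDerivAt (fun x : ℝ => x ^ s) (s * t ^ (s-1)) t :=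
      Real.hasDerivAt_rpow_const (Or.inl ht.ne')
    have h2 : HasDerivAt (fun x : ℝ => x⁻¹) (-(t^2)⁻¹) t := hasDerivAt_inv ht.ne'
    have h3 := ((h1.sub_const ((1 - s^2) * l ^ s)).sub
        ((hasDerivAt_id t).const_mul ((1/2) * s * (s+1) * l ^ (s-1)))).sub
        (h2.const_mul ((1/2) * s * (s-1) * l ^ (s+1)))
    refine h3.congr_deriv ?_
    simp only [hf]
    ring
  -- value of f at l
  have hfl : f l = 0 := by
    have el3 : l ^ (s+1) = l ^ (s-1) * l^2 := by rw [el2, el1]; ring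
    simp only [hf, el3]
    field_simp
    ring
  -- derivative of f
  have hfder : ∀ t : ℝ, 0 < t →
      HasDerivAt f (s * ((s-1) * t ^ (s-2))
        + (1/2) * s * (s-1) * l ^ (s+1) * (-(2*t) / (t^2)^2)) t := by
    intro t ht
    have h1 : HasDerivAt (fun x : ℝ => x ^ (s-1)) ((s-1) * t ^ (s-1-1)) t :=
      Real.hasDerivAt_rpow_const (Or.inl ht.ne')
    have h2 : HasDerivAt (fun x : ℝ => (x^2)⁻¹) (-(2*t) / (t^2)^2) t := by
      have this : HasDerivAt (fun x : ℝ => (x^2)⁻¹) _ t := (hasDerivAt_pow 2 t).inv (by positivity)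
      convert this using 1
      norm_num
    have h3 := ((h1.const_mul s).sub_const ((1/2) * s * (s+1) * l ^ (s-1))).add
        (h2.const_mul ((1/2) * s * (s-1) * l ^ (s+1)))
    rw [show s - 1 - 1 = s - 2 by ring] at h3
    exact h3
  -- f' is nonneg on [l, ∞)
  have hf'nonneg : ∀ t : ℝ, l ≤ t → 0 ≤ s * ((s-1) * t ^ (s-2))
      + (1/2) * s * (s-1) * l ^ (s+1) * (-(2*t) / (t^2)^2) := by
    intro t ht
    have ht0 : 0 < t := lt_of_lt_of_le hl0 ht
    have key : l ^ (s+1) ≤ t ^ (s+1) := Real.rpow_le_rpow hl0.le ht (by linarith)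
    have et : t ^ (s-2) * t^3 = t ^ (s+1) := by
      rw [← Real.rpow_natCast t 3, ← Real.rpow_add ht0]
      ring_nf
    have h4 : s * ((s-1) * t ^ (s-2)) + (1/2) * s * (s-1) * l ^ (s+1) * (-(2*t) / (t^2)^2)
        = s * (s-1) * (t ^ (s-2) * t^3 - l ^ (s+1)) / t^3 := by
      field_simp
      ring
    rw [h4, et]
    have h5 : 0 ≤ t ^ (s+1) - l ^ (s+1) := by linarith
    have ht3 : 0 ≤ t^3 := by positivity
    exact div_nonneg (mul_nonneg (mul_nonneg (by linarith) (by linarith)) h5) ht3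
  -- f is nonneg on [l, ∞)
  have hfmono : MonotoneOn f (Set.Ici l) := by
    apply monotoneOn_of_deriv_nonneg (convex_Ici l)
    · intro x hx
      exact (hfder x (lt_of_lt_of_le hl0 hx)).continuousAt.continuousWithinAt
    · intro x hx
      rw [interior_Ici] at hx
      exact ((hfder x (lt_trans hl0 hx)).differentiableAt).differentiableWithinAt
    · intro x hx
      rw [interior_Ici] at hx
      rw [(hfder x (lt_trans hl0 hx)).deriv]
      exact hf'nonneg x hx.le
  have hfnonneg : ∀ t : ℝ, l ≤ t → 0 ≤ f t := by
    intro t ht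
    have := hfmono (Set.self_mem_Ici) ht ht
    rwa [hfl] at this
  -- deriv g = f on (0, ∞)
  have hderiv_g : ∀ t : ℝ, 0 < t → deriv g t = f t := fun t ht => (hder t ht).deriv
  refine ⟨hgl, ?_, ?_⟩
  · intro t ht
    rw [hderiv_g t (lt_of_lt_of_le hl0 ht)]
    exact hfnonneg t ht
  · intro t ht
    have hgmono : MonotoneOn g (Set.Ici l) := by
      apply monotoneOn_of_deriv_nonneg (convex_Ici l)
      · intro x hx
        exact (hder x (lt_of_lt_of_le hl0 hx)).continuousAt.continuousWithinAt
      · intro x hx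
        rw [interior_Ici] at hx
        exact ((hder x (lt_trans hl0 hx)).differentiableAt).differentiableWithinAt
      · intro x hx
        rw [interior_Ici] at hx
        rw [hderiv_g x (lt_trans hl0 hx)]
        exact hfnonneg x hx.le
    have := hgmono (Set.self_mem_Ici) ht ht
    rwa [hgl] at this
end
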